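/- Let N be a network, T a tree on the same leaf set, F a downward-closed subforest of T, and φ a pseudo-embedding of F into N. Let xz and yz be arcs of N with x ≠ y, and let a and b be arcs of F such that the path φ(a) contains the arc xz. Then the path φ(b) does not contain the arc yz. -/

import Mathlib

namespace Phylo

noncomputable section

attribute [local instance] Classical.propDecidable

/-- An arc set over vertex type `V`: a finite directed graph given by its arcs. -/
abbrev ArcSet (V : Type) := Finset (V × V)

section Basic

variable {V : Type} [DecidableEq V]

/-- The nodes of the digraph: all endpoints of arcs. -/
def nodes (A : ArcSet V) : Finset V := A.image Prod.fst ∪ A.image Prod.snd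

/-- The arc relation of the digraph. -/
def arcRel (A : ArcSet V) : V → V → Prop := fun u v => (u, v) ∈ A

/-- `Reach A u v`: `v` is reachable from `u` by a directed path, i.e. `v ≤_A u`. -/
def Reach (A : ArcSet V) (u v : V) : Prop := Relation.ReflTransGen (arcRel A) u v

/-- `SReach A u v`: `v` is reachable from `u` by a directed path of length ≥ 1,
i.e. `v <_A u` (in a DAG). -/
def SReach (A : ArcSet V) (u v : V) : Prop := Relation.TransGen (arcRel A) u v

def indeg (A : ArcSet V) (v : V) : ℕ := (A.filter fun a => a.2 = v).card

def outdeg (A : ArcSet V) (v : V) : ℕ := (A.filter fun a => a.1 = v).card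

def inArcs (A : ArcSet V) (v : V) : Finset (V × V) := A.filter fun a => a.2 = v

def outArcs (A : ArcSet V) (v : V) : Finset (V × V) := A.filter fun a => a.1 = v

/-- The leaves: nodes of out-degree zero (identified with their labels). -/
def leaves (A : ArcSet V) : Finset V := (nodes A).filter fun v => outdeg A v = 0

def Acyclic (A : ArcSet V) : Prop := ∀ v : V, ¬ SReach A v v

/-- A (phylogenetic) network: a finite DAG with a unique in-degree-zero node (the root)
in which every node has in-degree one or out-degree one.  Leaves are identified with
their labels, so a network "on leaf set L" is one with `leaves A = L`. -/
structure IsNetwork (A : ArcSet V) : Prop where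
  acyclic : Acyclic A
  unique_root : ∃! r : V, r ∈ nodes A ∧ indeg A r = 0
  degree_cond : ∀ v ∈ nodes A, indeg A v = 1 ∨ outdeg A v = 1

/-- A (phylogenetic) tree: a network with no node of in-degree at least two. -/
def IsPhyloTree (A : ArcSet V) : Prop := IsNetwork A ∧ ∀ v ∈ nodes A, indeg A v ≤ 1

/-- The descendant order extended to arcs: `a ≤_A b` iff `a = b` or the tail of `a`
is reachable from the head of `b`. -/
def ArcLE (A : ArcSet V) (a b : V × V) : Prop := a = b ∨ Reach A b.2 a.1

/-- Strict version of `ArcLE`. -/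
def ArcLT (A : ArcSet V) (a b : V × V) : Prop := ArcLE A a b ∧ a ≠ b

/-- The (arc set of the) forest `T_S` below the arc set `S`. -/
def below (A : ArcSet V) (S : Finset (V × V)) : Finset (V × V) :=
  A.filter fun a => ∃ s ∈ S, ArcLE A a s

/-- `F` is a downward-closed subforest of the tree with arc set `AT`. -/
def IsDCSubforest (AT : ArcSet V) (F : Finset (V × V)) : Prop :=
  ∃ S : Finset (V × V), S ⊆ AT ∧ S.Nonempty ∧ F = below AT S

/-- The top-arc set of `F`: the maximal arcs of `F` with respect to `ArcLE`. -/
def topArcs (A : ArcSet V) (F : Finset (V × V)) : Finset (V × V) :=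
  F.filter fun a => ∀ b ∈ F, ArcLE A a b → a = b

/-- `S` is an antichain of arcs with respect to the strict order `ArcLT`. -/
def ArcAntichain (A : ArcSet V) (S : Finset (V × V)) : Prop :=
  ∀ a ∈ S, ∀ b ∈ S, ¬ ArcLT A a b

/-- The leaves of `T` lying below some arc of `F` (the leaf set of a
downward-closed subforest with arc set `F`, and of `T_F`). -/
def forestLeaves (AT : ArcSet V) (F : Finset (V × V)) : Finset V :=
  (leaves AT).filter fun l => ∃ a ∈ F, Reach AT a.2 l

/-- `L(T_y)`: leaves of `T` below the node `y`. -/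
def leavesBelow (AT : ArcSet V) (y : V) : Finset V :=
  (leaves AT).filter fun l => Reach AT y l

/-- A directed path of length ≥ 1, given by its list of vertices. -/
def IsDipath (A : ArcSet V) (p : List V) : Prop :=
  2 ≤ p.length ∧ p.Chain' (arcRel A)

/-- The arcs of a path given by its vertex list. -/
def pathArcs (p : List V) : List (V × V) := p.zip p.tail

/-- The path `p` begins with the arc `e`. -/
def startsWith (p : List V) (e : V × V) : Prop := (pathArcs p).head? = some e

/-- The origin of the path `p` is `v`. -/
def originIs (p : List V) (v : V) : Prop := p.head? = some v

/-- A pseudo-embedding of the (downward-closed sub)forest with arc set `F` of the tree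
`AT` into the network `AN`: each arc of `F` is mapped to a directed path of length ≥ 1
in `AN` such that (a) consecutive arcs yield composable paths, (b) distinct arcs yield
arc-disjoint paths, and (c) an arc into a leaf `l` of `T` is mapped to a path ending
at the equally-labelled leaf `l` of `N`. -/
structure IsPseudoEmbedding (AT AN : ArcSet V) (F : Finset (V × V))
    (phi : V × V → List V) : Prop where
  isPath : ∀ a ∈ F, IsDipath AN (phi a)
  comp : ∀ x y z : V, (x, y) ∈ F → (y, z) ∈ F →
    (phi (x, y)).getLast? = (phi (y, z)).head?
  disjoint : ∀ a ∈ F, ∀ b ∈ F, a ≠ b → ∀ e ∈ pathArcs (phi a), e ∉ pathArcs (phi b)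
  leaf : ∀ x l : V, (x, l) ∈ F → l ∈ leaves AT → (phi (x, l)).getLast? = some l

/-- A rooted tree (as a digraph): acyclic, every node has in-degree at most one,
and there is a root from which every node is reachable. -/
def IsRootedTree (A : ArcSet V) : Prop :=
  Acyclic A ∧ (∀ v ∈ nodes A, indeg A v ≤ 1) ∧
    ∃ r ∈ nodes A, indeg A r = 0 ∧ ∀ v ∈ nodes A, Reach A r v

/-- `AΓ` is a tree extension of the DAG `AN`: a rooted tree on the same node set
whose descendant order contains that of `AN`. -/
def IsTreeExtension (AN AG : ArcSet V) : Prop :=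
  IsRootedTree AG ∧ nodes AG = nodes AN ∧ ∀ u v : V, SReach AN u v → SReach AG u v

/-- The node set of the subtree `Γ_v` of `Γ` rooted at `v`. -/
def gammaSub (AG : ArcSet V) (v : V) : Finset V := (nodes AG).filter fun u => Reach AG v u

/-- `L(Γ_v)`: the leaves of `Γ` in the subtree rooted at `v`. -/
def gammaLeaves (AG : ArcSet V) (v : V) : Finset V := (leaves AG).filter fun u => Reach AG v u

/-- Weak connectivity of the subgraph of `A` induced by the vertex set `Sv`. -/
def WeaklyConnectedOn (A : ArcSet V) (Sv : Finset V) : Prop :=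
  ∀ u ∈ Sv, ∀ w ∈ Sv,
    Relation.ReflTransGen (fun x y => x ∈ Sv ∧ y ∈ Sv ∧ ((x, y) ∈ A ∨ (y, x) ∈ A)) u w

/-- A canonical tree extension: a tree extension such that every subtree induces a
weakly connected subgraph of the underlying DAG. -/
def IsCanonicalTreeExtension (AN AG : ArcSet V) : Prop :=
  IsTreeExtension AN AG ∧ ∀ v ∈ nodes AG, WeaklyConnectedOn AN (gammaSub AG v)

/-- `GW_v(Γ)`: the arcs `xy` of the DAG with `x` strictly above `v` in `Γ` and
`y` below or equal to `v` in `Γ`. -/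
def GW (AN AG : ArcSet V) (v : V) : Finset (V × V) :=
  AN.filter fun a => SReach AG a.1 v ∧ Reach AG v a.2

/-- The part of the `v`-split of `Y` belonging to the child `q`. -/
def splitPart (AT AG : ArcSet V) (q : V) (Y : Finset (V × V)) : Finset (V × V) :=
  Y.filter fun a => leavesBelow AT a.2 ⊆ gammaLeaves AG q

/-- `ψ` is a valid map on the arc set `S`: injective, and every arc `xy ∈ S` is
mapped to an arc `wz` with `L(T_y) ⊆ L(Γ_z)`. -/
def ValidMap (AT AG : ArcSet V) (S : Finset (V × V)) (psi : V × V → V × V) : Prop :=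
  Set.InjOn psi ↑S ∧ ∀ a ∈ S, leavesBelow AT a.2 ⊆ gammaLeaves AG (psi a).2

/-- `S` is a top-arc set for the leaf set `L'`: an antichain of arcs of `T` such that
the leaf set of `T_S` equals `L'`. -/
def IsTopArcSetFor (AT : ArcSet V) (S : Finset (V × V)) (L' : Finset V) : Prop :=
  S ⊆ AT ∧ ArcAntichain AT S ∧ forestLeaves AT S = L'

/-- Contraction of the arc `uv`: remove `v` and the arc `uv`, and redirect every other
arc incident with `v` to `u` instead. -/
def contractArc (A : ArcSet V) (u v : V) : ArcSet V :=
  (A.erase (u, v)).image fun a => (if a.1 = v then u else a.1, if a.2 = v then u else a.2)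

/-- `p` is a directed path from `x` to `y` in `A`. -/
def IsPathFrom (A : ArcSet V) (p : List V) (x y : V) : Prop :=
  p.head? = some x ∧ p.getLast? = some y ∧ p.Chain' (arcRel A)

/-- The family of demands `D` is satisfied in `A`: there are pairwise arc-disjoint
directed paths, one from `x` to `y` for each demand `(x, y) ∈ D`. -/
def SatisfiesDemands (A : ArcSet V) (D : Finset (V × V)) : Prop :=
  ∃ p : V × V → List V,
    (∀ d ∈ D, IsPathFrom A (p d) d.1 d.2) ∧
      ∀ d ∈ D, ∀ d' ∈ D, d ≠ d' → ∀ e ∈ pathArcs (p d), e ∉ pathArcs (p d')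

/-- One subdivision step: replace an arc `xy` by the two arcs `xw`, `wy` for a
fresh vertex `w`. -/
def SubdivStep {W : Type} [DecidableEq W] (A A' : Finset (W × W)) : Prop :=
  ∃ x y w : W, (x, y) ∈ A ∧ w ∉ nodes A ∧
    A' = insert (x, w) (insert (w, y) (A.erase (x, y)))

/-- `AN` displays `AT`: some DAG obtained from `AT` by repeatedly subdividing arcs
(with fresh vertices drawn from `V ⊕ ℕ`) admits a leaf-respecting isomorphism onto a
subgraph of `AN`. -/
def Displays (AN AT : ArcSet V) : Prop :=
  ∃ (A' : Finset ((V ⊕ ℕ) × (V ⊕ ℕ))) (iota : V ⊕ ℕ → V),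
    Relation.ReflTransGen SubdivStep
      (AT.image fun a => ((Sum.inl a.1 : V ⊕ ℕ), (Sum.inl a.2 : V ⊕ ℕ))) A' ∧
    Set.InjOn iota ↑(nodes A') ∧
    (∀ a ∈ A', (iota a.1, iota a.2) ∈ AN) ∧
    ∀ l ∈ leaves AT, iota (Sum.inl l) = l

end Basic

section Ordered

variable {V : Type} [LinearOrder V]

/-- The list of children of `v` in `Γ`, in increasing order; the `j`-th child `q_j`
is the entry at index `j - 1`. -/
def childrenList (A : ArcSet V) (v : V) : List V :=
  ((A.filter fun a => a.1 = v).image Prod.snd).sort (· ≤ ·)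

/-- `Y` is `v`-splittable: every arc of `Y` belongs to the part of the `v`-split
corresponding to some child of `v` in `Γ`. -/
def VSplittable (AT AG : ArcSet V) (v : V) (Y : Finset (V × V)) : Prop :=
  ∀ a ∈ Y, ∃ q ∈ childrenList AG v, a ∈ splitPart AT AG q Y

/-- `⋃_{i ≤ j} Y_i`: the arcs of `Y` in the split parts of the first `j` children
of `v` in `Γ`. -/
def unionUpTo (AT AG : ArcSet V) (v : V) (j : ℕ) (Y : Finset (V × V)) : Finset (V × V) :=
  Y.filter fun a => ∃ q ∈ (childrenList AG v).take j, leavesBelow AT a.2 ⊆ gammaLeaves AG q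

/-- `(v, S, ψ, j)` is a signature. -/
def IsSignature (AN AG AT : ArcSet V) (v : V) (S : Finset (V × V))
    (psi : V × V → V × V) (j : ℕ) : Prop :=
  v ∈ nodes AN ∧ j ≤ (childrenList AG v).length ∧
    IsTopArcSetFor AT S (gammaLeaves AG v) ∧
    (∀ a ∈ S, psi a ∈ GW AN AG v) ∧ ValidMap AT AG S psi

/-- The dynamic-programming predicate `χ[v, S, ψ, j]`. -/
def Chi (AN AG AT : ArcSet V) (v : V) (S : Finset (V × V))
    (psi : V × V → V × V) (j : ℕ) : Prop :=
  -- case (a)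
  (j = 0 ∧ (VSplittable AT AG v S ∨
    ∃ a ∈ S, psi a ∈ inArcs AN v ∧ VSplittable AT AG v (S.erase a))) ∨
  -- case (b)
  (0 < j ∧ VSplittable AT AG v S ∧
    ∃ phi : V × V → List V,
      IsPseudoEmbedding AT AN (below AT (unionUpTo AT AG v j S)) phi ∧
        ∀ a ∈ unionUpTo AT AG v j S, startsWith (phi a) (psi a)) ∨
  -- case (c)
  (0 < j ∧ ∃ a ∈ S, psi a ∈ inArcs AN v ∧ VSplittable AT AG v (S.erase a) ∧
    (outArcs AT a.2).Nonempty ∧ VSplittable AT AG v (outArcs AT a.2) ∧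
    ∃ phi : V × V → List V,
      IsPseudoEmbedding AT AN
        (below AT (unionUpTo AT AG v j (S.erase a) ∪ unionUpTo AT AG v j (outArcs AT a.2)))
        phi ∧
      (∀ b ∈ unionUpTo AT AG v j (S.erase a), startsWith (phi b) (psi b)) ∧
      ∀ b ∈ unionUpTo AT AG v j (outArcs AT a.2), originIs (phi b) v)

end Ordered

end

end Phylo

open Phylo

namespace Stmt4Aux

set_option linter.unusedSectionVars false

attribute [local instance] Classical.propDecidable

open Phylo

lemma mem_zip_iff {α β : Type*} : ∀ (l : List α) (l' : List β) (a : α) (b : β),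
    ((a, b) ∈ l.zip l' ↔ ∃ i : ℕ, l[i]? = some a ∧ l'[i]? = some b)
  | [], _, a, b => by simp
  | _ :: _, [], a, b => by simp
  | x :: t, y :: t', a, b => by
    rw [List.zip_cons_cons, List.mem_cons, mem_zip_iff t t' a b]
    constructor
    · rintro (h | ⟨i, h1, h2⟩)
      · rw [Prod.mk.injEq] at h
        exact ⟨0, by simp [h.1], by simp [h.2]⟩
      · exact ⟨i + 1, by simpa using h1, by simpa using h2⟩
    · rintro ⟨i, h1, h2⟩
      match i with
      | 0 =>
        left
        simp only [List.getElem?_cons_zero, Option.some.injEq] at h1 h2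
        rw [h1, h2]
      | (i + 1) =>
        right
        exact ⟨i, by simpa using h1, by simpa using h2⟩

lemma mem_pathArcs_iff {V : Type} {p : List V} {a b : V} :
    (a, b) ∈ pathArcs p ↔ ∃ i : ℕ, p[i]? = some a ∧ p[i + 1]? = some b := by
  rw [pathArcs, mem_zip_iff]
  simp only [List.getElem?_tail]

lemma chain'_rel {α : Type*} {r : α → α → Prop} {p : List α} (hp : p.Chain' r) {i : ℕ}
    {u v : α} (h1 : p[i]? = some u) (h2 : p[i + 1]? = some v) : r u v := by
  obtain ⟨hi1, e1⟩ := List.getElem?_eq_some_iff.1 h1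
  obtain ⟨hi2, e2⟩ := List.getElem?_eq_some_iff.1 h2
  replace hp := List.isChain_iff_getElem.1 hp
  have := hp i (by omega)
  rwa [e1, e2] at this

lemma chain'_transGen {α : Type*} {r : α → α → Prop} {p : List α} (hp : p.Chain' r) :
    ∀ (k i : ℕ) {u v : α}, p[i]? = some u → p[i + k + 1]? = some v → Relation.TransGen r u v
  | 0, i, u, v, h1, h2 => .single (chain'_rel hp h1 h2)
  | k + 1, i, u, v, h1, h2 => by
    have hlen : i + k + 2 < p.length := by
      have := (List.getElem?_eq_some_iff.1 h2).1; omega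
    have hm : p[i + k + 1]? = some (p[i + k + 1]'(by omega)) := List.getElem?_eq_getElem _
    have h2' : p[(i + k + 1) + 1]? = some v := by
      have e : (i + k + 1) + 1 = i + (k + 1) + 1 := by omega
      rw [e]; exact h2
    exact (chain'_transGen hp k i h1 hm).tail (chain'_rel hp hm h2')

lemma cyc {α : Type*} {r : α → α → Prop} {p : List α} (hp : p.Chain' r) {i j : ℕ} {z : α}
    (hij : i < j) (h1 : p[i]? = some z) (h2 : p[j]? = some z) : Relation.TransGen r z z := by
  obtain ⟨k, rfl⟩ : ∃ k, j = i + k + 1 := ⟨j - i - 1, by omega⟩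
  exact chain'_transGen hp k i h1 h2

variable {V : Type} [DecidableEq V]

lemma no_two_inarcs {AN : ArcSet V} (hac : Acyclic AN) {p : List V}
    (hp : p.Chain' (arcRel AN)) {x y z : V} (hxy : x ≠ y)
    (h1 : (x, z) ∈ pathArcs p) (h2 : (y, z) ∈ pathArcs p) : False := by
  obtain ⟨i, hi1, hi2⟩ := mem_pathArcs_iff.1 h1
  obtain ⟨j, hj1, hj2⟩ := mem_pathArcs_iff.1 h2
  have hij : i ≠ j := by
    rintro rfl
    exact hxy (Option.some.inj (hi1.symm.trans hj1))
  rcases Nat.lt_or_ge i j with h | h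
  · exact hac z (cyc hp (by omega : i + 1 < j + 1) hi2 hj2)
  · exact hac z (cyc hp (by omega : j + 1 < i + 1) hj2 hi2)

lemma head_no_inarc {AN : ArcSet V} (hac : Acyclic AN) {p : List V}
    (hp : p.Chain' (arcRel AN)) {x z : V} (hh : p.head? = some z)
    (h1 : (x, z) ∈ pathArcs p) : False := by
  obtain ⟨i, hi1, hi2⟩ := mem_pathArcs_iff.1 h1
  rw [List.head?_eq_getElem?] at hh
  exact hac z (cyc hp (Nat.succ_pos i) hh hi2)

lemma out_unique {AN : ArcSet V} {z : V} (h : outdeg AN z = 1) :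
    ∃ w, (z, w) ∈ AN ∧ ∀ u, (z, u) ∈ AN → u = w := by
  rw [outdeg, Finset.card_eq_one] at h
  obtain ⟨e, he⟩ := h
  rw [Finset.eq_singleton_iff_unique_mem] at he
  obtain ⟨heM, huniq⟩ := he
  obtain ⟨heT, he1⟩ := Finset.mem_filter.1 heM
  refine ⟨e.2, ?_, ?_⟩
  · rw [← he1]; rwa [Prod.mk.eta]
  · intro u hu
    have := huniq (z, u) (Finset.mem_filter.2 ⟨hu, rfl⟩)
    exact congrArg Prod.snd this

lemma F_subset {AT : ArcSet V} {F : Finset (V × V)} (hF : IsDCSubforest AT F) : F ⊆ AT := by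
  obtain ⟨S, _, _, rfl⟩ := hF
  exact Finset.filter_subset _ _

lemma dc_closed {AT : ArcSet V} {F : Finset (V × V)} (hF : IsDCSubforest AT F) :
    ∀ a ∈ F, ∀ c, (a.2, c) ∈ AT → (a.2, c) ∈ F := by
  obtain ⟨S, hS, hne, rfl⟩ := hF
  intro a ha c hc
  rw [below, Finset.mem_filter] at ha ⊢
  obtain ⟨haT, s, hsS, hle⟩ := ha
  refine ⟨hc, s, hsS, Or.inr ?_⟩
  rcases hle with rfl | hr
  · exact Relation.ReflTransGen.refl
  · have harc : arcRel AT a.1 a.2 := by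
      show (a.1, a.2) ∈ AT; rwa [Prod.mk.eta]
    exact hr.tail harc

lemma step {AT AN : ArcSet V} {F : Finset (V × V)} {phi : V × V → List V}
    (hphi : IsPseudoEmbedding AT AN F phi)
    (hdc : ∀ a ∈ F, ∀ c, (a.2, c) ∈ AT → (a.2, c) ∈ F)
    (hFT : F ⊆ AT) {x z w : V}
    (hw : ∀ u, (z, u) ∈ AN → u = w)
    (hznl : z ∉ leaves AT) {a : V × V}
    (ha : a ∈ F) (hmem : (x, z) ∈ pathArcs (phi a)) :
    (z, w) ∈ pathArcs (phi a) ∨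
      ∃ a' ∈ F, a'.1 = a.2 ∧ (phi a').head? = some z ∧ (z, w) ∈ pathArcs (phi a') := by
  obtain ⟨a1, a2⟩ := a
  obtain ⟨i, h1, h2⟩ := mem_pathArcs_iff.1 hmem
  have hchain : (phi (a1, a2)).Chain' (arcRel AN) := (hphi.isPath (a1, a2) ha).2
  cases h3 : (phi (a1, a2))[i + 1 + 1]? with
  | some u =>
    have harc : arcRel AN z u := chain'_rel hchain h2 h3
    left
    exact mem_pathArcs_iff.2 ⟨i + 1, h2, hw u harc ▸ h3⟩
  | none =>
    have hlen2 : i + 1 < (phi (a1, a2)).length := (List.getElem?_eq_some_iff.1 h2).1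
    have hlen : (phi (a1, a2)).length = i + 1 + 1 := by
      have := List.getElem?_eq_none_iff.1 h3; omega
    have hlast : (phi (a1, a2)).getLast? = some z := by
      rw [List.getLast?_eq_getElem?, hlen]
      simpa using h2
    have ha2nl : a2 ∉ leaves AT := by
      intro hl
      have hlf := hphi.leaf a1 a2 ha hl
      have hz : z = a2 := Option.some.inj (hlast.symm.trans hlf)
      exact hznl (by rw [hz]; exact hl)
    have ha2n : a2 ∈ nodes AT :=
      Finset.mem_union_right _ (Finset.mem_image.2 ⟨(a1, a2), hFT ha, rfl⟩)
    have hout : outdeg AT a2 ≠ 0 := by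
      intro h0
      exact ha2nl (by rw [leaves]; exact Finset.mem_filter.2 ⟨ha2n, h0⟩)
    rw [outdeg] at hout
    obtain ⟨e, he⟩ := Finset.card_ne_zero.1 hout
    obtain ⟨heT, he1⟩ := Finset.mem_filter.1 he
    have hec : (a2, e.2) ∈ AT := by rw [← he1]; rwa [Prod.mk.eta]
    have hecF : (a2, e.2) ∈ F := hdc (a1, a2) ha e.2 hec
    have hcomp := hphi.comp a1 a2 e.2 ha hecF
    have hhead : (phi (a2, e.2)).head? = some z := hcomp ▸ hlast
    obtain ⟨hl2, hch2⟩ := hphi.isPath (a2, e.2) hecF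
    have h0 : (phi (a2, e.2))[0]? = some z := by
      rw [← List.head?_eq_getElem?]; exact hhead
    have h1' : (phi (a2, e.2))[0 + 1]? = some ((phi (a2, e.2))[1]'(by omega)) :=
      List.getElem?_eq_getElem _
    have harc : arcRel AN z _ := chain'_rel hch2 h0 h1'
    have hwu := hw _ harc
    right
    exact ⟨(a2, e.2), hecF, rfl, hhead, mem_pathArcs_iff.2 ⟨0, h0, by rw [h1', hwu]⟩⟩

end Stmt4Aux


/-- paths in the image of a pseudo-embedding do not converge in the
same vertex: if `φ(a)` contains the arc `xz` then no `φ(b)` contains an arc `yz`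
with `y ≠ x`. -/
theorem stmt4 {V : Type} [DecidableEq V] (AT AN : ArcSet V) (F : Finset (V × V))
    (phi : V × V → List V) (x y z : V) (a b : V × V)
    (hT : IsPhyloTree AT) (hN : IsNetwork AN) (hleaf : leaves AN = leaves AT)
    (hF : IsDCSubforest AT F)
    (hphi : IsPseudoEmbedding AT AN F phi)
    (hxz : (x, z) ∈ AN) (hyz : (y, z) ∈ AN) (hxy : x ≠ y)
    (ha : a ∈ F) (hb : b ∈ F)
    (hmem : (x, z) ∈ pathArcs (phi a)) :
    (y, z) ∉ pathArcs (phi b) := by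
  intro hby
  have hzn : z ∈ nodes AN :=
    Finset.mem_union_right _ (Finset.mem_image.2 ⟨(x, z), hxz, rfl⟩)
  have hindeg : indeg AN z ≠ 1 := by
    have h2 : 1 < indeg AN z := by
      rw [indeg]
      exact Finset.one_lt_card.2 ⟨(x, z), Finset.mem_filter.2 ⟨hxz, rfl⟩,
        (y, z), Finset.mem_filter.2 ⟨hyz, rfl⟩, by simp [hxy]⟩
    omega
  have houtd : outdeg AN z = 1 := (hN.degree_cond z hzn).resolve_left hindeg
  obtain ⟨w, hwAN, hw⟩ := Stmt4Aux.out_unique houtd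
  have hznl : z ∉ leaves AT := by
    intro hl
    rw [← hleaf, leaves, Finset.mem_filter] at hl
    omega
  have hdc := Stmt4Aux.dc_closed hF
  have hFT := Stmt4Aux.F_subset hF
  have hsa := Stmt4Aux.step hphi hdc hFT hw hznl ha hmem
  have hsb := Stmt4Aux.step hphi hdc hFT hw hznl hb hby
  have hchaina : (phi a).Chain' (arcRel AN) := (hphi.isPath a ha).2
  have hchainb : (phi b).Chain' (arcRel AN) := (hphi.isPath b hb).2
  rcases hsa with hA | ⟨a', ha'F, ha'1, ha'h, ha'zw⟩ <;>
    rcases hsb with hB | ⟨b', hb'F, hb'1, hb'h, hb'zw⟩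
  · by_cases hab : a = b
    · subst hab
      exact Stmt4Aux.no_two_inarcs hN.acyclic hchaina hxy hmem hby
    · exact hphi.disjoint a ha b hb hab (z, w) hA hB
  · by_cases hab : a = b'
    · subst hab
      exact Stmt4Aux.head_no_inarc hN.acyclic hchaina hb'h hmem
    · exact hphi.disjoint a ha b' hb'F hab (z, w) hA hb'zw
  · by_cases hab : b = a'
    · subst hab
      exact Stmt4Aux.head_no_inarc hN.acyclic hchainb ha'h hby
    · exact hphi.disjoint b hb a' ha'F hab (z, w) hB ha'zw
  · by_cases hab' : a' = b'
    · have hab2 : a.2 = b.2 := by rw [← ha'1, ← hb'1, hab']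
      by_cases hab : a = b
      · subst hab
        exact Stmt4Aux.no_two_inarcs hN.acyclic hchaina hxy hmem hby
      · have ha2n : a.2 ∈ nodes AT :=
          Finset.mem_union_right _ (Finset.mem_image.2 ⟨a, hFT ha, rfl⟩)
        have hle1 : indeg AT a.2 ≤ 1 := hT.2 a.2 ha2n
        have hgt1 : 1 < indeg AT a.2 := by
          rw [indeg]
          exact Finset.one_lt_card.2 ⟨a, Finset.mem_filter.2 ⟨hFT ha, rfl⟩,
            b, Finset.mem_filter.2 ⟨hFT hb, hab2.symm⟩, hab⟩
        omega
    · exact hphi.disjoint a' ha'F b' hb'F hab' (z, w) ha'zw hb'zw
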